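/- Let d ≥ 1 and q ≥ 1. If every continuous map g : Δ_d^{(d+2)(q-1)} → ℝ^{d+1} admits a winding partition (in dimension d+1), then every continuous map f : Δ_{d-1}^{(d+1)(q-1)} → ℝ^d admits a winding partition (in dimension d). -/

import Mathlib

open scoped BigOperators

noncomputable section

/-- Euclidean space `ℝ^d`. -/
abbrev Euc (d : ℕ) : Type := EuclideanSpace ℝ (Fin d)

/-- The standard `N`-simplex `Δ^N ⊆ ℝ^{N+1}`. -/
def stdSimp (N : ℕ) : Set (Fin (N+1) → ℝ) :=
  {x | (∀ i, 0 ≤ x i) ∧ ∑ i, x i = 1}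

/-- The face `σ_S` of `Δ^N` spanned by the vertices in `S`. -/
def simpFace {N : ℕ} (S : Finset (Fin (N+1))) : Set (Fin (N+1) → ℝ) :=
  {x ∈ stdSimp N | ∀ i ∉ S, x i = 0}

/-- The `k`-skeleton `Δ_k^N` of the standard `N`-simplex. -/
def skel (N k : ℕ) : Set (Fin (N+1) → ℝ) :=
  {x ∈ stdSimp N | {i | x i ≠ 0}.ncard ≤ k + 1}

/-- A Tverberg partition for (the relevant restriction of) `f`: a set of `q`
pairwise disjoint nonempty vertex subsets whose faces have images with a common point. -/
def IsTverbergPartition (q : ℕ) {N d : ℕ}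
    (f : (Fin (N+1) → ℝ) → Euc d) (P : Finset (Finset (Fin (N+1)))) : Prop :=
  P.card = q ∧ (∀ S ∈ P, S.Nonempty) ∧
  (∀ S ∈ P, ∀ T ∈ P, S ≠ T → Disjoint S T) ∧
  (⋂ S ∈ P, f '' simpFace S).Nonempty

/-- The boundary `∂σ_S` of the face `σ_S`. -/
def simpFaceBoundary {N : ℕ} (S : Finset (Fin (N+1))) : Set (Fin (N+1) → ℝ) :=
  {x ∈ simpFace S | ∃ i ∈ S, x i = 0}

/-- `p ∈ W_{≠0}(f|_{∂σ_S})`: either `p` is in the image of the boundary, or the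
corestriction of `f|_{∂σ_S}` to `ℝ^d \ {p}` is not nullhomotopic (there is no
continuous map agreeing with `f` on `∂σ_S` that is homotopic to a constant). -/
def InWne (d : ℕ) {N : ℕ} (f : (Fin (N+1) → ℝ) → Euc d)
    (S : Finset (Fin (N+1))) (p : Euc d) : Prop :=
  p ∈ f '' simpFaceBoundary S ∨
  ¬ ∃ (g : C(↥(simpFaceBoundary S), ↥({p}ᶜ : Set (Euc d))))
      (y : ↥({p}ᶜ : Set (Euc d))),
      (∀ x : ↥(simpFaceBoundary S), (g x : Euc d) = f ↑x) ∧
      g.Homotopic (ContinuousMap.const _ y)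

/-- A winding partition (in dimension `d`) for `f` defined on the `(d-1)`-skeleton:
`q` pairwise disjoint nonempty vertex subsets, each of size at most `d+1`, together
with a winding point `p`. -/
def IsWindingPartition (d q : ℕ) {N : ℕ}
    (f : (Fin (N+1) → ℝ) → Euc d) (P : Finset (Finset (Fin (N+1)))) : Prop :=
  P.card = q ∧ (∀ S ∈ P, S.Nonempty) ∧ (∀ S ∈ P, S.card ≤ d + 1) ∧
  (∀ S ∈ P, ∀ T ∈ P, S ≠ T → Disjoint S T) ∧
  ∃ p : Euc d, ∀ S ∈ P,
    (S.card ≤ d → p ∈ f '' simpFace S) ∧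
    (S.card = d + 1 → InWne d f S p)

namespace WindRed

/-- support finset -/
def suppF {N : ℕ} (x : Fin (N+1) → ℝ) : Finset (Fin (N+1)) :=
  Finset.univ.filter (fun i => x i ≠ 0)

lemma mem_suppF {N : ℕ} {x : Fin (N+1) → ℝ} {i : Fin (N+1)} : i ∈ suppF x ↔ x i ≠ 0 := by
  simp [suppF]

lemma ncard_supp_eq {N : ℕ} (x : Fin (N+1) → ℝ) :
    {i | x i ≠ 0}.ncard = (suppF x).card := by
  rw [show {i | x i ≠ 0} = (↑(suppF x) : Set (Fin (N+1))) by ext i; simp [mem_suppF]]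
  exact Set.ncard_coe_finset _

lemma mem_skel_iff {N k : ℕ} {x : Fin (N+1) → ℝ} :
    x ∈ skel N k ↔ x ∈ stdSimp N ∧ (suppF x).card ≤ k + 1 := by
  simp only [skel, Set.mem_setOf_eq, ncard_supp_eq]

lemma isClosed_stdSimp (N : ℕ) : IsClosed (stdSimp N) := by
  have : stdSimp N = (⋂ i, {x : Fin (N+1) → ℝ | 0 ≤ x i}) ∩ {x | ∑ i, x i = 1} := by
    ext x; simp [stdSimp, Set.mem_iInter]
  rw [this]
  exact (isClosed_iInter fun i =>
    isClosed_le continuous_const (continuous_apply i)).inter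
    (isClosed_eq (continuous_finset_sum _ fun i _ => continuous_apply i) continuous_const)

lemma isCompact_stdSimp (N : ℕ) : IsCompact (stdSimp N) := by
  have hsub : stdSimp N ⊆ Set.univ.pi (fun _ : Fin (N+1) => Set.Icc (0:ℝ) 1) := by
    intro x hx i _
    refine ⟨hx.1 i, ?_⟩
    calc x i = ∑ j ∈ {i}, x j := by simp
    _ ≤ ∑ j, x j := Finset.sum_le_sum_of_subset_of_nonneg (Finset.subset_univ _)
        (fun j _ _ => hx.1 j)
    _ = 1 := hx.2
  exact (isCompact_univ_pi fun _ => isCompact_Icc).of_isClosed_subset (isClosed_stdSimp N) hsub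

lemma isClosed_skel (N k : ℕ) : IsClosed (skel N k) := by
  have : skel N k = stdSimp N ∩ {x | (suppF x).card ≤ k + 1} := by
    ext x; rw [mem_skel_iff]; rfl
  rw [this]
  refine (isClosed_stdSimp N).inter ?_
  rw [← isOpen_compl_iff]
  rw [isOpen_iff_mem_nhds]
  intro x hx
  simp only [Set.mem_compl_iff, Set.mem_setOf_eq, not_le] at hx
  have hopen : IsOpen {y : Fin (N+1) → ℝ | ∀ i ∈ suppF x, y i ≠ 0} := by
    have : {y : Fin (N+1) → ℝ | ∀ i ∈ suppF x, y i ≠ 0} =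
        ⋂ i ∈ (suppF x : Set (Fin (N+1))), (fun y : Fin (N+1) → ℝ => y i) ⁻¹' {0}ᶜ := by
      ext y; simp
    rw [this]
    exact (Set.toFinite _).isOpen_biInter fun i _ =>
      (continuous_apply i).isOpen_preimage _ isOpen_compl_singleton
  refine Filter.mem_of_superset (hopen.mem_nhds ?_) ?_
  · intro i hi; exact mem_suppF.mp hi
  · intro y hy
    simp only [Set.mem_compl_iff, Set.mem_setOf_eq, not_le]
    calc k + 1 < (suppF x).card := hx
    _ ≤ (suppF y).card := Finset.card_le_card (fun i hi => mem_suppF.mpr (hy i hi))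

lemma isCompact_skel (N k : ℕ) : IsCompact (skel N k) :=
  (isCompact_stdSimp N).of_isClosed_subset (isClosed_skel N k) (fun _ hx => hx.1)

lemma simpFace_subset_stdSimp {N : ℕ} (S : Finset (Fin (N+1))) :
    simpFace S ⊆ stdSimp N := fun _ hx => hx.1

lemma suppF_subset_of_mem_face {N : ℕ} {S : Finset (Fin (N+1))} {x : Fin (N+1) → ℝ}
    (hx : x ∈ simpFace S) : suppF x ⊆ S := by
  intro i hi
  by_contra h
  exact (mem_suppF.mp hi) (hx.2 i h)

lemma simpFace_subset_skel {N k : ℕ} {S : Finset (Fin (N+1))} (hS : S.card ≤ k + 1) :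
    simpFace S ⊆ skel N k := by
  intro x hx
  rw [mem_skel_iff]
  exact ⟨hx.1, le_trans (Finset.card_le_card (suppF_subset_of_mem_face hx)) hS⟩

lemma simpFaceBoundary_subset_skel {N k : ℕ} {S : Finset (Fin (N+1))} (hS : S.card ≤ k + 2) :
    simpFaceBoundary S ⊆ skel N k := by
  rintro x ⟨hx, i, hiS, hxi⟩
  rw [mem_skel_iff]
  refine ⟨hx.1, ?_⟩
  have : suppF x ⊆ S.erase i := by
    intro j hj
    rcases mem_suppF.mp hj with hj0
    refine Finset.mem_erase.mpr ⟨?_, suppF_subset_of_mem_face hx hj⟩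
    rintro rfl; exact hj0 hxi
  calc (suppF x).card ≤ (S.erase i).card := Finset.card_le_card this
  _ = S.card - 1 := Finset.card_erase_of_mem hiS
  _ ≤ k + 1 := by omega

lemma mem_simpFace_of_supp {N : ℕ} {x : Fin (N+1) → ℝ} (hx : x ∈ stdSimp N)
    {T : Finset (Fin (N+1))} (hT : suppF x ⊆ T) : x ∈ simpFace T := by
  refine ⟨hx, fun i hi => ?_⟩
  by_contra h
  exact hi (hT (mem_suppF.mpr h))

end WindRed

namespace WindRed

/-! ### The construction -/

-- dimensions: `N = (d+1)*e`, `M = (d+2)*e`, where `e = q - 1`.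
def NN (d e : ℕ) : ℕ := (d+1)*e
def MM (d e : ℕ) : ℕ := (d+2)*e

lemma NN_le_MM (d e : ℕ) : NN d e + 1 ≤ MM d e + 1 := by
  have : (d+1)*e ≤ (d+2)*e := Nat.mul_le_mul_right e (by omega)
  simp only [NN, MM]; omega

def emb (d e : ℕ) : Fin (NN d e + 1) ↪ Fin (MM d e + 1) := Fin.castLEEmb (NN_le_MM d e)

def oldS (d e : ℕ) : Finset (Fin (MM d e + 1)) :=
  Finset.univ.filter (fun j => (j : ℕ) < NN d e + 1)

def newS (d e : ℕ) : Finset (Fin (MM d e + 1)) :=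
  Finset.univ.filter (fun j => ¬ ((j : ℕ) < NN d e + 1))

lemma oldS_eq_map (d e : ℕ) : oldS d e = Finset.map (emb d e) Finset.univ := by
  ext j
  simp only [oldS, Finset.mem_filter, Finset.mem_univ, true_and, Finset.mem_map]
  constructor
  · intro h
    exact ⟨⟨(j : ℕ), h⟩, Fin.ext rfl⟩
  · rintro ⟨i, rfl⟩
    exact i.2

lemma card_oldS (d e : ℕ) : (oldS d e).card = NN d e + 1 := by
  rw [oldS_eq_map]; simp

lemma card_newS (d e : ℕ) : (newS d e).card = e := by
  have h := Finset.card_filter_add_card_filter_not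
    (s := (Finset.univ : Finset (Fin (MM d e + 1)))) (fun j => (j : ℕ) < NN d e + 1)
  have hc : (Finset.univ : Finset (Fin (MM d e + 1))).card = MM d e + 1 := by simp
  rw [hc] at h
  have : (oldS d e).card + (newS d e).card = MM d e + 1 := by
    simpa [oldS, newS] using h
  rw [card_oldS] at this
  have h2 : (d+2)*e = (d+1)*e + e := by ring
  simp only [NN, MM] at this ⊢
  omega

lemma mem_oldS {d e : ℕ} {j : Fin (MM d e + 1)} : j ∈ oldS d e ↔ (j : ℕ) < NN d e + 1 := by
  simp [oldS]

lemma mem_newS {d e : ℕ} {j : Fin (MM d e + 1)} : j ∈ newS d e ↔ ¬ ((j : ℕ) < NN d e + 1) := by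
  simp [newS]

/-- sum of the "new" coordinates -/
def tF (d e : ℕ) (x : Fin (MM d e + 1) → ℝ) : ℝ := ∑ j ∈ newS d e, x j

/-- restriction to the "old" coordinates -/
def xo (d e : ℕ) (x : Fin (MM d e + 1) → ℝ) : Fin (NN d e + 1) → ℝ :=
  fun i => x (emb d e i)

lemma sum_xo (d e : ℕ) (x : Fin (MM d e + 1) → ℝ) :
    ∑ i, xo d e x i = ∑ j ∈ oldS d e, x j := by
  rw [oldS_eq_map, Finset.sum_map]; rfl

lemma sum_old_eq (d e : ℕ) {x : Fin (MM d e + 1) → ℝ} (hx : ∑ j, x j = 1) :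
    ∑ j ∈ oldS d e, x j = 1 - tF d e x := by
  have h : ∑ j ∈ oldS d e, x j + ∑ j ∈ newS d e, x j = ∑ j, x j :=
    Finset.sum_filter_add_sum_filter_not _ _ _
  rw [hx] at h
  simp only [tF]
  linarith

lemma tF_nonneg (d e : ℕ) {x : Fin (MM d e + 1) → ℝ} (hx0 : ∀ j, 0 ≤ x j) : 0 ≤ tF d e x :=
  Finset.sum_nonneg fun j _ => hx0 j

/-- the collection of `(d+1)`-element subsets of old vertices -/
def TTt (d e : ℕ) : Finset (Finset (Fin (MM d e + 1))) := (oldS d e).powersetCard (d+1)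

lemma TTt_nonempty (d : ℕ) {e : ℕ} (he : 1 ≤ e) : (TTt d e).Nonempty := by
  rw [TTt, Finset.powersetCard_nonempty, card_oldS]
  have : d + 1 ≤ (d+1)*e := Nat.le_mul_of_pos_right (d+1) (by omega)
  simp only [NN]; omega

lemma TTt_mem_nonempty {d e : ℕ} {T : Finset (Fin (MM d e + 1))} (hT : T ∈ TTt d e) :
    T.Nonempty := by
  rw [TTt, Finset.mem_powersetCard] at hT
  rw [← Finset.card_pos, hT.2]; omega

lemma TTt_subset_old {d e : ℕ} {T : Finset (Fin (MM d e + 1))} (hT : T ∈ TTt d e) :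
    T ⊆ oldS d e := (Finset.mem_powersetCard.mp hT).1

lemma TTt_card {d e : ℕ} {T : Finset (Fin (MM d e + 1))} (hT : T ∈ TTt d e) :
    T.card = d + 1 := (Finset.mem_powersetCard.mp hT).2

/-- the `(d+1)`-st largest old coordinate, as a max-min -/
def muF (d e : ℕ) (x : Fin (MM d e + 1) → ℝ) : ℝ :=
  if h : 1 ≤ e then
    ((TTt d e).attach).sup' ((Finset.attach_nonempty_iff).mpr (TTt_nonempty d h))
      (fun T => T.1.inf' (TTt_mem_nonempty T.2) x)
  else 0

lemma le_muF (d : ℕ) {e : ℕ} (he : 1 ≤ e) (x : Fin (MM d e + 1) → ℝ)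
    {T : Finset (Fin (MM d e + 1))} (hT : T ∈ TTt d e) :
    T.inf' (TTt_mem_nonempty hT) x ≤ muF d e x := by
  rw [muF, dif_pos he]
  exact Finset.le_sup' (f := fun T : {T // T ∈ TTt d e} => T.1.inf' (TTt_mem_nonempty T.2) x)
    (Finset.mem_attach _ ⟨T, hT⟩)

lemma exists_muF (d : ℕ) {e : ℕ} (he : 1 ≤ e) (x : Fin (MM d e + 1) → ℝ) :
    ∃ T : Finset (Fin (MM d e + 1)), ∃ hT : T ∈ TTt d e,
      muF d e x = T.inf' (TTt_mem_nonempty hT) x := by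
  rw [muF, dif_pos he]
  obtain ⟨T, -, hT2⟩ := Finset.exists_mem_eq_sup' ((Finset.attach_nonempty_iff).mpr
    (TTt_nonempty d he)) (fun T : {T // T ∈ TTt d e} => T.1.inf' (TTt_mem_nonempty T.2) x)
  exact ⟨T.1, T.2, hT2⟩

lemma muF_nonneg (d : ℕ) {e : ℕ} (he : 1 ≤ e) {x : Fin (MM d e + 1) → ℝ}
    (hx0 : ∀ j, 0 ≤ x j) : 0 ≤ muF d e x := by
  obtain ⟨T, hT⟩ := TTt_nonempty d he
  refine le_trans ?_ (le_muF d he x hT)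
  exact Finset.le_inf' _ _ fun j _ => hx0 j

/-- the old support, as a finset -/
def oSupp (d e : ℕ) (x : Fin (MM d e + 1) → ℝ) : Finset (Fin (MM d e + 1)) :=
  (oldS d e).filter (fun j => x j ≠ 0)

lemma muF_eq_zero (d : ℕ) {e : ℕ} (he : 1 ≤ e) {x : Fin (MM d e + 1) → ℝ}
    (hx0 : ∀ j, 0 ≤ x j) (hcard : (oSupp d e x).card ≤ d) : muF d e x = 0 := by
  refine le_antisymm ?_ (muF_nonneg d he hx0)
  obtain ⟨T, hT, heq⟩ := exists_muF d he x
  rw [heq]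
  have : ¬ T ⊆ oSupp d e x := by
    intro hsub
    have := Finset.card_le_card hsub
    rw [TTt_card hT] at this
    omega
  obtain ⟨j, hjT, hj⟩ := Finset.not_subset.mp this
  have hxj : x j = 0 := by
    by_contra h
    exact hj (Finset.mem_filter.mpr ⟨TTt_subset_old hT hjT, h⟩)
  calc T.inf' (TTt_mem_nonempty hT) x ≤ x j := Finset.inf'_le _ hjT
  _ = 0 := hxj

lemma osupp_card_le (d : ℕ) {e : ℕ} (he : 1 ≤ e) {x : Fin (MM d e + 1) → ℝ}
    (hx0 : ∀ j, 0 ≤ x j) (hmu : muF d e x = 0) : (oSupp d e x).card ≤ d := by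
  by_contra h
  push_neg at h
  obtain ⟨T, hTsub, hTcard⟩ := Finset.exists_subset_card_eq (show d + 1 ≤ (oSupp d e x).card by omega)
  have hT : T ∈ TTt d e := Finset.mem_powersetCard.mpr
    ⟨hTsub.trans (Finset.filter_subset _ _), hTcard⟩
  have hpos : 0 < T.inf' (TTt_mem_nonempty hT) x := by
    rw [Finset.lt_inf'_iff]
    intro j hj
    have hj' := hTsub hj
    rw [oSupp, Finset.mem_filter] at hj'
    exact lt_of_le_of_ne (hx0 j) (Ne.symm hj'.2)
  have := le_muF d he x hT
  rw [hmu] at this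
  linarith

lemma card_gt_muF (d : ℕ) {e : ℕ} (he : 1 ≤ e) (x : Fin (MM d e + 1) → ℝ) :
    ((oldS d e).filter (fun j => muF d e x < x j)).card ≤ d := by
  by_contra h
  push_neg at h
  obtain ⟨T, hTsub, hTcard⟩ := Finset.exists_subset_card_eq
    (show d + 1 ≤ ((oldS d e).filter (fun j => muF d e x < x j)).card by omega)
  have hT : T ∈ TTt d e := Finset.mem_powersetCard.mpr
    ⟨hTsub.trans (Finset.filter_subset _ _), hTcard⟩
  have hlt : muF d e x < T.inf' (TTt_mem_nonempty hT) x := by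
    rw [Finset.lt_inf'_iff]
    intro j hj
    exact (Finset.mem_filter.mp (hTsub hj)).2
  have := le_muF d he x hT
  linarith

lemma continuous_tF (d e : ℕ) : Continuous (tF d e) :=
  continuous_finset_sum _ fun j _ => continuous_apply j

lemma continuous_muF (d e : ℕ) : Continuous (muF d e) := by
  unfold muF
  by_cases he : 1 ≤ e
  · simp only [dif_pos he]
    have h1 : ∀ T : {T // T ∈ TTt d e},
        Continuous (fun x : Fin (MM d e + 1) → ℝ => T.1.inf' (TTt_mem_nonempty T.2) x) := by
      intro T
      have h := Continuous.finset_inf' (L := ℝ)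
        (f := fun j (x : Fin (MM d e + 1) → ℝ) => x j)
        (TTt_mem_nonempty T.2) (fun j _ => continuous_apply j)
      convert h using 1
      funext x
      rw [Finset.inf'_apply]
    have h2 := Continuous.finset_sup' (L := ℝ)
      (f := fun (T : {T // T ∈ TTt d e}) (x : Fin (MM d e + 1) → ℝ) =>
        T.1.inf' (TTt_mem_nonempty T.2) x)
      ((Finset.attach_nonempty_iff).mpr (TTt_nonempty d he)) (fun T _ => h1 T)
    convert h2 using 1
    funext x
    rw [Finset.sup'_apply]
  · simp only [dif_neg he]
    exact continuous_const

end WindRed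

namespace WindRed

section Constr
variable (d e : ℕ) (f : (Fin (NN d e + 1) → ℝ) → Euc d)

def yF (x : Fin (MM d e + 1) → ℝ) : Fin (NN d e + 1) → ℝ :=
  fun i => max (xo d e x i - muF d e x) 0

def sF (x : Fin (MM d e + 1) → ℝ) : ℝ := ∑ i, yF d e x i

def zF (x : Fin (MM d e + 1) → ℝ) : Fin (NN d e + 1) → ℝ := (sF d e x)⁻¹ • yF d e x

def AF (x : Fin (MM d e + 1) → ℝ) : Euc d := sF d e x • f (zF d e x)

def lamF (x : Fin (MM d e + 1) → ℝ) : ℝ := tF d e x - muF d e x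

def snE {d : ℕ} (a : Euc d) (b : ℝ) : Euc (d+1) := WithLp.toLp 2 (Fin.snoc (fun i => a i) b : Fin (d+1) → ℝ)

def gF (x : Fin (MM d e + 1) → ℝ) : Euc (d+1) := snE (AF d e f x) (lamF d e x)

def pAh {d : ℕ} (p : Euc (d+1)) : Euc d := WithLp.toLp 2 (fun i => p (Fin.castSucc i) : Fin d → ℝ)

def pLh {d : ℕ} (p : Euc (d+1)) : ℝ := p (Fin.last d)

end Constr

section SnE
variable {d : ℕ}

lemma snE_castSucc (a : Euc d) (b : ℝ) (i : Fin d) : snE a b (Fin.castSucc i) = a i := by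
  simp [snE, Fin.snoc_castSucc]

lemma snE_last (a : Euc d) (b : ℝ) : snE a b (Fin.last d) = b := by
  simp [snE]

lemma pAh_apply (p : Euc (d+1)) (i : Fin d) : pAh p i = p (Fin.castSucc i) := rfl

lemma snE_eq_iff {a : Euc d} {b : ℝ} {p : Euc (d+1)} :
    snE a b = p ↔ a = pAh p ∧ b = pLh p := by
  constructor
  · intro h
    constructor
    · ext i
      rw [pAh_apply, ← h, snE_castSucc]
    · rw [pLh, ← h, snE_last]
  · rintro ⟨rfl, rfl⟩
    ext j
    refine Fin.lastCases ?_ (fun i => ?_) j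
    · rw [snE_last]; rfl
    · rw [snE_castSucc]; rfl

lemma snE_ne_of_fst {a : Euc d} {b : ℝ} {p : Euc (d+1)} (ha : a ≠ pAh p) : snE a b ≠ p :=
  fun h => ha (snE_eq_iff.mp h).1

lemma snE_ne_of_snd {a : Euc d} {b : ℝ} {p : Euc (d+1)} (hb : b ≠ pLh p) : snE a b ≠ p :=
  fun h => hb (snE_eq_iff.mp h).2

lemma combo_snE (u : ℝ) (a a' : Euc d) (b b' : ℝ) :
    (1-u) • snE a b + u • snE a' b' = snE ((1-u) • a + u • a') ((1-u)*b + u*b') := by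
  ext j
  refine Fin.lastCases ?_ (fun i => ?_) j
  · show (1-u) * snE a b (Fin.last d) + u * snE a' b' (Fin.last d) = _
    rw [snE_last, snE_last, snE_last]
  · show (1-u) * snE a b (Fin.castSucc i) + u * snE a' b' (Fin.castSucc i) = _
    rw [snE_castSucc, snE_castSucc, snE_castSucc]
    rfl

lemma continuous_snE_comp {X : Type*} [TopologicalSpace X] {a : X → Euc d} {b : X → ℝ}
    (ha : Continuous a) (hb : Continuous b) : Continuous fun x => snE (a x) (b x) := by
  have h1 : Continuous fun x => (Fin.snoc (fun i => a x i) (b x) : Fin (d+1) → ℝ) := by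
    refine continuous_pi fun j => ?_
    refine Fin.lastCases ?_ (fun i => ?_) j
    · simpa only [Fin.snoc_last] using hb
    · simpa only [Fin.snoc_castSucc, Function.comp_def] using ((continuous_apply i).comp
        ((PiLp.continuous_ofLp 2 (fun _ : Fin d => ℝ)).comp ha))
  exact (PiLp.continuous_toLp 2 (fun _ : Fin (d+1) => ℝ)).comp h1

lemma continuousOn_snE_comp {X : Type*} [TopologicalSpace X] {a : X → Euc d} {b : X → ℝ}
    {s : Set X} (ha : ContinuousOn a s) (hb : ContinuousOn b s) :
    ContinuousOn (fun x => snE (a x) (b x)) s := by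
  rw [continuousOn_iff_continuous_restrict] at *
  exact continuous_snE_comp ha hb

end SnE

section ConstrLemmas
variable {d e : ℕ}

lemma continuous_xo (d e : ℕ) : Continuous (xo d e) :=
  continuous_pi fun i => continuous_apply _

lemma continuous_yF (d e : ℕ) : Continuous (yF d e) :=
  continuous_pi fun i =>
    (((continuous_apply _).comp (continuous_xo d e)).sub (continuous_muF d e)).max
      continuous_const

lemma continuous_sF (d e : ℕ) : Continuous (sF d e) :=
  continuous_finset_sum _ fun i _ => (continuous_apply i).comp (continuous_yF d e)

lemma continuous_lamF (d e : ℕ) : Continuous (lamF d e) :=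
  (continuous_tF d e).sub (continuous_muF d e)

lemma yF_nonneg (x : Fin (MM d e + 1) → ℝ) (i : Fin (NN d e + 1)) : 0 ≤ yF d e x i :=
  le_max_right _ _

lemma sF_nonneg (x : Fin (MM d e + 1) → ℝ) : 0 ≤ sF d e x :=
  Finset.sum_nonneg fun i _ => yF_nonneg x i

lemma sF_le (he : 1 ≤ e) {x : Fin (MM d e + 1) → ℝ} (hx0 : ∀ j, 0 ≤ x j)
    (hx1 : ∑ j, x j = 1) : sF d e x ≤ 1 - tF d e x := by
  have hmu := muF_nonneg d he hx0
  have h1 : ∀ i, yF d e x i ≤ xo d e x i := by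
    intro i
    rw [yF]
    exact max_le (by linarith [hx0 (emb d e i)]) (hx0 (emb d e i))
  calc sF d e x ≤ ∑ i, xo d e x i := Finset.sum_le_sum fun i _ => h1 i
  _ = ∑ j ∈ oldS d e, x j := sum_xo d e x
  _ = 1 - tF d e x := sum_old_eq d e hx1

/-- the support of `zF` has at most `d` elements -/
lemma card_suppF_zF (he : 1 ≤ e) {x : Fin (MM d e + 1) → ℝ} (hs : sF d e x ≠ 0) :
    (suppF (zF d e x)).card ≤ d := by
  have hmap : ∀ i ∈ suppF (zF d e x), emb d e i ∈ (oldS d e).filter (fun j => muF d e x < x j) := by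
    intro i hi
    rw [mem_suppF] at hi
    have hyi : yF d e x i ≠ 0 := by
      intro h0
      apply hi
      rw [zF, Pi.smul_apply, h0, smul_eq_mul, mul_zero]
    have : 0 < xo d e x i - muF d e x := by
      by_contra h
      push_neg at h
      exact hyi (max_eq_right h)
    refine Finset.mem_filter.mpr ⟨?_, by rw [xo] at this; linarith⟩
    rw [mem_oldS]
    exact i.2
  calc (suppF (zF d e x)).card
      ≤ ((oldS d e).filter (fun j => muF d e x < x j)).card := by
        refine Finset.card_le_card_of_injOn (emb d e) hmap ?_
        exact fun i _ j _ h => (emb d e).injective h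
  _ ≤ d := card_gt_muF d he x

lemma zF_mem_stdSimp {x : Fin (MM d e + 1) → ℝ} (hs : sF d e x ≠ 0) :
    zF d e x ∈ stdSimp (NN d e) := by
  have hspos : 0 < sF d e x := lt_of_le_of_ne (sF_nonneg x) (Ne.symm hs)
  constructor
  · intro i
    rw [zF, Pi.smul_apply, smul_eq_mul]
    exact mul_nonneg (by positivity) (yF_nonneg x i)
  · rw [zF]
    simp only [Pi.smul_apply, smul_eq_mul]
    rw [← Finset.mul_sum]
    rw [show ∑ i, yF d e x i = sF d e x from rfl]
    field_simp

lemma zF_mem_skel (hd : 1 ≤ d) (he : 1 ≤ e) {x : Fin (MM d e + 1) → ℝ}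
    (hs : sF d e x ≠ 0) : zF d e x ∈ skel (NN d e) (d-1) := by
  rw [mem_skel_iff]
  refine ⟨zF_mem_stdSimp hs, ?_⟩
  have := card_suppF_zF he hs
  omega

/-- t = 0 for a point supported on old coordinates -/
lemma tF_eq_zero {x : Fin (MM d e + 1) → ℝ} (hsupp : ∀ j ∈ newS d e, x j = 0) :
    tF d e x = 0 :=
  Finset.sum_eq_zero hsupp

lemma new_eq_zero_of_tF {x : Fin (MM d e + 1) → ℝ} (hx0 : ∀ j, 0 ≤ x j)
    (ht : tF d e x = 0) : ∀ j ∈ newS d e, x j = 0 := by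
  intro j hj
  have := (Finset.sum_eq_zero_iff_of_nonneg (fun j _ => hx0 j)).mp ht
  exact this j hj

/-- the key computation at "honest" points -/
lemma nice_point (he : 1 ≤ e) {x : Fin (MM d e + 1) → ℝ} (hx0 : ∀ j, 0 ≤ x j)
    (hx1 : ∑ j, x j = 1) (ht : tF d e x = 0) (hmu : muF d e x = 0)
    (f : (Fin (NN d e + 1) → ℝ) → Euc d) :
    sF d e x = 1 ∧ zF d e x = xo d e x ∧ AF d e f x = f (xo d e x) ∧
      gF d e f x = snE (f (xo d e x)) 0 ∧
      xo d e x ∈ stdSimp (NN d e) ∧ (suppF (xo d e x)).card ≤ d := by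
  have hy : yF d e x = xo d e x := by
    funext i
    rw [yF, hmu, sub_zero]
    exact max_eq_left (hx0 _)
  have hsum : sF d e x = 1 := by
    rw [sF, hy, sum_xo, sum_old_eq d e hx1, ht, sub_zero]
  have hz : zF d e x = xo d e x := by
    rw [zF, hsum, hy, inv_one, one_smul]
  have hA : AF d e f x = f (xo d e x) := by
    rw [AF, hsum, hz, one_smul]
  have hsuppcard : (suppF (xo d e x)).card ≤ d := by
    have hmap : ∀ i ∈ suppF (xo d e x), emb d e i ∈ oSupp d e x := by
      intro i hi
      rw [mem_suppF, xo] at hi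
      refine Finset.mem_filter.mpr ⟨?_, hi⟩
      rw [mem_oldS]
      exact i.2
    calc (suppF (xo d e x)).card ≤ (oSupp d e x).card :=
          Finset.card_le_card_of_injOn (emb d e) hmap
            (fun i _ j _ h => (emb d e).injective h)
    _ ≤ d := osupp_card_le d he hx0 hmu
  refine ⟨hsum, hz, hA, ?_, ⟨fun i => hx0 _, by rw [sum_xo, sum_old_eq d e hx1, ht, sub_zero]⟩,
    hsuppcard⟩
  rw [gF, hA, lamF, ht, hmu, sub_zero]

end ConstrLemmas
end WindRed

namespace WindRed

section Cont
variable {d e : ℕ} {f : (Fin (NN d e + 1) → ℝ) → Euc d}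

lemma continuousOn_AF (hd : 1 ≤ d) (he : 1 ≤ e)
    (hf : ContinuousOn f (skel (NN d e) (d-1))) :
    ContinuousOn (AF d e f) (skel (MM d e) d) := by
  obtain ⟨C, hC⟩ := (isCompact_skel (NN d e) (d-1)).exists_bound_of_continuousOn hf
  intro x₀ hx₀
  by_cases hs : sF d e x₀ = 0
  · have hA0 : AF d e f x₀ = 0 := by rw [AF, hs, zero_smul]
    show Filter.Tendsto _ _ _
    rw [hA0]
    apply squeeze_zero_norm' (a := fun x => max C 0 * sF d e x)
    · refine Filter.eventually_of_mem self_mem_nhdsWithin ?_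
      intro x hx
      by_cases hsx : sF d e x = 0
      · rw [AF, hsx, zero_smul, norm_zero]
        positivity
      · rw [AF, norm_smul, Real.norm_eq_abs, abs_of_nonneg (sF_nonneg x)]
        rw [mul_comm]
        apply mul_le_mul_of_nonneg_right _ (sF_nonneg x)
        exact le_trans (hC _ (zF_mem_skel hd he hsx)) (le_max_left _ _)
    · have h2 : Filter.Tendsto (fun x => max C 0 * sF d e x)
          (nhdsWithin x₀ (skel (MM d e) d)) (nhds (max C 0 * sF d e x₀)) :=
        ((continuous_const.mul (continuous_sF d e)).tendsto x₀).mono_left nhdsWithin_le_nhds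
      rwa [hs, mul_zero] at h2
  · have hU : IsOpen {x : Fin (MM d e + 1) → ℝ | sF d e x ≠ 0} :=
      isOpen_compl_singleton.preimage (continuous_sF d e)
    have hz : ContinuousWithinAt (AF d e f)
        (skel (MM d e) d ∩ {x | sF d e x ≠ 0}) x₀ := by
      apply ContinuousWithinAt.smul (continuous_sF d e).continuousAt.continuousWithinAt
      have hzc : ContinuousAt (zF d e) x₀ := by
        apply ContinuousAt.smul ((continuous_sF d e).continuousAt.inv₀ hs)
        exact (continuous_yF d e).continuousAt
      have hcomp := ContinuousWithinAt.comp (hf _ (zF_mem_skel hd he hs))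
        hzc.continuousWithinAt
        (fun x (hx : x ∈ skel (MM d e) d ∩ {x | sF d e x ≠ 0}) => zF_mem_skel hd he hx.2)
      exact hcomp
    exact hz.mono_of_mem_nhdsWithin (Filter.inter_mem self_mem_nhdsWithin
      (mem_nhdsWithin_of_mem_nhds (hU.mem_nhds hs)))

lemma continuousOn_gF (hd : 1 ≤ d) (he : 1 ≤ e)
    (hf : ContinuousOn f (skel (NN d e) (d-1))) :
    ContinuousOn (gF d e f) (skel (MM d e) d) :=
  continuousOn_snE_comp (continuousOn_AF hd he hf) (continuous_lamF d e).continuousOn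

end Cont

/-! ### homotopy helpers -/

lemma homotopic_of_segment {k : ℕ} {X : Type*} [TopologicalSpace X] {p : Euc k}
    (G M : C(X, ↥({p}ᶜ : Set (Euc k))))
    (h : ∀ (x : X) (u : ℝ), 0 ≤ u → u ≤ 1 → (1-u) • (G x : Euc k) + u • (M x : Euc k) ≠ p) :
    G.Homotopic M := by
  refine ⟨⟨⟨fun z => ⟨(1 - (z.1 : ℝ)) • (G z.2 : Euc k) + (z.1 : ℝ) • (M z.2 : Euc k),
      ?_⟩, ?_⟩, ?_, ?_⟩⟩
  · exact h z.2 z.1 z.1.2.1 z.1.2.2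
  · apply Continuous.subtype_mk
    have hu : Continuous fun z : ↥unitInterval × X => (z.1 : ℝ) :=
      continuous_subtype_val.comp continuous_fst
    have hG : Continuous fun z : ↥unitInterval × X => (G z.2 : Euc k) :=
      continuous_subtype_val.comp (G.continuous.comp continuous_snd)
    have hM : Continuous fun z : ↥unitInterval × X => (M z.2 : Euc k) :=
      continuous_subtype_val.comp (M.continuous.comp continuous_snd)
    exact ((continuous_const.sub hu).smul hG).add (hu.smul hM)
  · intro x; ext; simp
  · intro x; ext; simp

section Witness
variable {d e : ℕ} {f : (Fin (NN d e + 1) → ℝ) → Euc d}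

/-- corestriction of `gF` to the complement of `p`, when `p` misses the boundary image -/
def corest (d e : ℕ) (f : (Fin (NN d e + 1) → ℝ) → Euc d)
    (hd : 1 ≤ d) (he : 1 ≤ e) (hf : ContinuousOn f (skel (NN d e) (d-1)))
    {S : Finset (Fin (MM d e + 1))} (hcard : S.card ≤ d + 2) {p : Euc (d+1)}
    (himg : p ∉ gF d e f '' simpFaceBoundary S) :
    C(↥(simpFaceBoundary S), ↥({p}ᶜ : Set (Euc (d+1)))) :=
  ⟨fun z => ⟨gF d e f z.1, fun hh => himg ⟨z.1, z.2, hh⟩⟩,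
    Continuous.subtype_mk
      (((continuousOn_gF hd he hf).mono (simpFaceBoundary_subset_skel hcard)).restrict) _⟩

lemma false_of_segment_to_const (hd : 1 ≤ d) (he : 1 ≤ e)
    (hf : ContinuousOn f (skel (NN d e) (d-1)))
    {S : Finset (Fin (MM d e + 1))} (hcard : S.card ≤ d + 2) {p : Euc (d+1)}
    (hIW : InWne (d+1) (gF d e f) S p)
    (himg : p ∉ gF d e f '' simpFaceBoundary S)
    (c : Euc (d+1)) (hc : c ≠ p)
    (hseg : ∀ x ∈ simpFaceBoundary S, ∀ u : ℝ, 0 ≤ u → u ≤ 1 →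
      (1-u) • gF d e f x + u • c ≠ p) : False := by
  rcases hIW with h | h
  · exact himg h
  · apply h
    refine ⟨corest d e f hd he hf hcard himg, ⟨c, hc⟩, fun z => rfl, ?_⟩
    apply homotopic_of_segment
    intro z u hu0 hu1
    exact hseg z.1 z.2 u hu0 hu1

lemma oSupp_sub_supp (d e : ℕ) (x : Fin (MM d e + 1) → ℝ) :
    oSupp d e x ⊆ suppF x := by
  intro j hj
  rw [mem_suppF]
  exact (Finset.mem_filter.mp hj).2

lemma tmu_of_lam_zero (he : 1 ≤ e) {x : Fin (MM d e + 1) → ℝ} (hx0 : ∀ j, 0 ≤ x j)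
    (hsm : tF d e x ≠ 0 → (oSupp d e x).card ≤ d) (hlam : lamF d e x = 0) :
    tF d e x = 0 ∧ muF d e x = 0 := by
  by_cases ht : tF d e x = 0
  · refine ⟨ht, ?_⟩
    have := hlam
    rw [lamF, ht] at this
    linarith
  · exfalso
    have hmu : muF d e x = 0 := muF_eq_zero d he hx0 (hsm ht)
    rw [lamF, hmu, sub_zero] at hlam
    exact ht hlam

lemma mu_zero_of_face_small (he : 1 ≤ e) {S : Finset (Fin (MM d e + 1))}
    {x : Fin (MM d e + 1) → ℝ} (hx : x ∈ simpFace S)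
    (hcard : (S ∩ oldS d e).card ≤ d) : muF d e x = 0 := by
  apply muF_eq_zero d he hx.1.1
  refine le_trans (Finset.card_le_card ?_) hcard
  intro j hj
  rw [oSupp, Finset.mem_filter] at hj
  exact Finset.mem_inter.mpr ⟨suppF_subset_of_mem_face hx (mem_suppF.mpr hj.2), hj.1⟩

lemma t_zero_of_face_old {S : Finset (Fin (MM d e + 1))} {x : Fin (MM d e + 1) → ℝ}
    (hx : x ∈ simpFace S) (hSold : S ⊆ oldS d e) : tF d e x = 0 := by
  apply tF_eq_zero
  intro j hj
  apply hx.2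
  intro hjS
  rw [mem_newS] at hj
  exact hj (mem_oldS.mp (hSold hjS))

/-- processing a witness point with `t = 0` and `μ = 0`: it produces a small face of the
`N`-world simplex containing `pAh p` in its `f`-image. -/
lemma Wlem (he : 1 ≤ e) {S : Finset (Fin (MM d e + 1))} {p : Euc (d+1)}
    {x : Fin (MM d e + 1) → ℝ} (hx : x ∈ simpFace S) (ht : tF d e x = 0)
    (hmu : muF d e x = 0) (hgx : gF d e f x = p) :
    ∃ T' : Finset (Fin (NN d e + 1)),
      (∀ i ∈ T', emb d e i ∈ S) ∧ T'.Nonempty ∧ T'.card ≤ d ∧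
      pAh p ∈ f '' simpFace T' := by
  obtain ⟨hs1, hzeq, hA, hg, hxo, hcard⟩ := nice_point he hx.1.1 hx.1.2 ht hmu f
  refine ⟨suppF (xo d e x), ?_, ?_, hcard, ?_⟩
  · intro i hi
    rw [mem_suppF, xo] at hi
    exact suppF_subset_of_mem_face hx (mem_suppF.mpr hi)
  · rw [Finset.nonempty_iff_ne_empty]
    intro hemp
    have hzero : ∀ i, xo d e x i = 0 := by
      intro i
      by_contra h
      have : i ∈ suppF (xo d e x) := mem_suppF.mpr h
      rw [hemp] at this
      exact absurd this (Finset.notMem_empty i)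
    have := hxo.2
    rw [Finset.sum_eq_zero (fun i _ => hzero i)] at this
    norm_num at this
  · refine ⟨xo d e x, mem_simpFace_of_supp hxo (le_refl _), ?_⟩
    rw [hg] at hgx
    exact (snE_eq_iff.mp hgx).1

end Witness
end WindRed

namespace WindRed

section Cases
variable {d e : ℕ} {f : (Fin (NN d e + 1) → ℝ) → Euc d}

lemma lam_of_witness {p : Euc (d+1)}
    {x : Fin (MM d e + 1) → ℝ} (hgx : gF d e f x = p) : lamF d e x = pLh p := by
  rw [gF] at hgx
  exact (snE_eq_iff.mp hgx).2

lemma caseA (he : 1 ≤ e) {S : Finset (Fin (MM d e + 1))} {p : Euc (d+1)}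
    (hpL : pLh p = 0) (hcard : S.card ≤ d+1)
    (hmem : p ∈ gF d e f '' simpFace S) :
    ∃ T' : Finset (Fin (NN d e + 1)),
      (∀ i ∈ T', emb d e i ∈ S) ∧ T'.Nonempty ∧ T'.card ≤ d+1 ∧
      (T'.card ≤ d → pAh p ∈ f '' simpFace T') ∧
      (T'.card = d+1 → InWne d f T' (pAh p)) := by
  obtain ⟨x, hx, hgx⟩ := hmem
  have hlam : lamF d e x = 0 := by rw [lam_of_witness hgx, hpL]
  have hsm : tF d e x ≠ 0 → (oSupp d e x).card ≤ d := by
    intro ht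
    obtain ⟨j, hj, hjne⟩ := Finset.exists_ne_zero_of_sum_ne_zero ht
    have hjS : j ∈ S := suppF_subset_of_mem_face hx (mem_suppF.mpr hjne)
    have hsub : oSupp d e x ⊆ S.erase j := by
      intro k hk
      have hk1 := Finset.mem_filter.mp hk
      refine Finset.mem_erase.mpr ⟨?_, suppF_subset_of_mem_face hx (mem_suppF.mpr hk1.2)⟩
      rintro rfl
      exact (mem_newS.mp hj) (mem_oldS.mp hk1.1)
    calc (oSupp d e x).card ≤ (S.erase j).card := Finset.card_le_card hsub
    _ = S.card - 1 := Finset.card_erase_of_mem hjS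
    _ ≤ d := by omega
  obtain ⟨ht, hmu⟩ := tmu_of_lam_zero he hx.1.1 hsm hlam
  obtain ⟨T', h1, h2, h3, h4⟩ := Wlem he hx ht hmu hgx
  exact ⟨T', h1, h2, by omega, fun _ => h4, fun hc => absurd hc (by omega)⟩

lemma caseB_sided (hd : 1 ≤ d) (he : 1 ≤ e)
    (hf : ContinuousOn f (skel (NN d e) (d-1)))
    {S : Finset (Fin (MM d e + 1))} {p : Euc (d+1)}
    (hpL : pLh p = 0) (hcard : S.card = d+2)
    (hIW : InWne (d+1) (gF d e f) S p)
    (hsgn : (S ⊆ oldS d e) ∨ ((S ∩ oldS d e).card ≤ d)) :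
    ∃ T' : Finset (Fin (NN d e + 1)),
      (∀ i ∈ T', emb d e i ∈ S) ∧ T'.Nonempty ∧ T'.card ≤ d+1 ∧
      (T'.card ≤ d → pAh p ∈ f '' simpFace T') ∧
      (T'.card = d+1 → InWne d f T' (pAh p)) := by
  by_cases himg : p ∈ gF d e f '' simpFaceBoundary S
  · obtain ⟨x, hx, hgx⟩ := himg
    have hlam : lamF d e x = 0 := by rw [lam_of_witness hgx, hpL]
    have hsm : tF d e x ≠ 0 → (oSupp d e x).card ≤ d := by
      intro ht
      rcases hsgn with hold | hsmall
      · exact absurd (t_zero_of_face_old hx.1 hold) ht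
      · refine le_trans (Finset.card_le_card ?_) hsmall
        intro j hj
        have hj1 := Finset.mem_filter.mp hj
        exact Finset.mem_inter.mpr
          ⟨suppF_subset_of_mem_face hx.1 (mem_suppF.mpr hj1.2), hj1.1⟩
    obtain ⟨ht, hmu⟩ := tmu_of_lam_zero he hx.1.1.1 hsm hlam
    obtain ⟨T', h1, h2, h3, h4⟩ := Wlem he hx.1 ht hmu hgx
    exact ⟨T', h1, h2, by omega, fun _ => h4, fun hc => absurd hc (by omega)⟩
  · exfalso
    -- choose the vertical sign
    rcases hsgn with hold | hsmall
    · -- λ ≤ 0 on the face; contract towards level -1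
      refine false_of_segment_to_const hd he hf (by omega) hIW himg
        (snE (pAh p) (-1)) (snE_ne_of_snd (by rw [hpL]; norm_num)) ?_
      intro x hx u hu0 hu1
      have hlx : lamF d e x ≤ 0 := by
        have ht := t_zero_of_face_old hx.1 hold
        have hmu := muF_nonneg d he hx.1.1.1
        rw [lamF, ht]
        linarith
      rw [gF, combo_snE]
      by_cases hz : (1-u) * lamF d e x + u * (-1) = 0
      · have hu : u = 0 := by nlinarith
        subst hu
        have h1 : ((1:ℝ)-0) • AF d e f x + (0:ℝ) • pAh p = AF d e f x := by
          rw [sub_zero, one_smul, zero_smul, add_zero]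
        have h2 : ((1:ℝ)-0)*lamF d e x + 0*(-1) = lamF d e x := by ring
        have h2' : ((1:ℝ)-0)*lamF d e x + 0*1 = lamF d e x := by ring
        rw [h1]
        first
        | (rw [h2]; exact fun hcon => himg ⟨x, hx, by rw [gF]; exact hcon⟩)
        | (rw [h2']; exact fun hcon => himg ⟨x, hx, by rw [gF]; exact hcon⟩)
      · exact snE_ne_of_snd (by rw [hpL]; exact hz)
    · -- λ ≥ 0 on the face; contract towards level +1
      refine false_of_segment_to_const hd he hf (by omega) hIW himg
        (snE (pAh p) 1) (snE_ne_of_snd (by rw [hpL]; norm_num)) ?_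
      intro x hx u hu0 hu1
      have hlx : 0 ≤ lamF d e x := by
        have hmu := mu_zero_of_face_small he hx.1 hsmall
        have ht := tF_nonneg d e hx.1.1.1
        rw [lamF, hmu]
        linarith
      rw [gF, combo_snE]
      by_cases hz : (1-u) * lamF d e x + u * 1 = 0
      · have hu : u = 0 := by nlinarith
        subst hu
        have h1 : ((1:ℝ)-0) • AF d e f x + (0:ℝ) • pAh p = AF d e f x := by
          rw [sub_zero, one_smul, zero_smul, add_zero]
        have h2 : ((1:ℝ)-0)*lamF d e x + 0*(-1) = lamF d e x := by ring
        have h2' : ((1:ℝ)-0)*lamF d e x + 0*1 = lamF d e x := by ring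
        rw [h1]
        first
        | (rw [h2]; exact fun hcon => himg ⟨x, hx, by rw [gF]; exact hcon⟩)
        | (rw [h2']; exact fun hcon => himg ⟨x, hx, by rw [gF]; exact hcon⟩)
      · exact snE_ne_of_snd (by rw [hpL]; exact hz)

lemma pL_eq_zero (hd : 1 ≤ d) (he : 1 ≤ e)
    (hf : ContinuousOn f (skel (NN d e) (d-1)))
    {P : Finset (Finset (Fin (MM d e + 1)))} (hcardP : P.card = e+1)
    (hne : ∀ S ∈ P, S.Nonempty) (hsize : ∀ S ∈ P, S.card ≤ d+2)
    (hdisj : ∀ S ∈ P, ∀ T ∈ P, S ≠ T → Disjoint S T)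
    {p : Euc (d+1)}
    (hcond : ∀ S ∈ P, (S.card ≤ d+1 → p ∈ gF d e f '' simpFace S) ∧
      (S.card = d+2 → InWne (d+1) (gF d e f) S p)) :
    pLh p = 0 := by
  rcases lt_trichotomy (pLh p) 0 with hneg | h0 | hpos
  · exfalso
    have hkey : ∀ S ∈ P, d+1 ≤ (S ∩ oldS d e).card := by
      intro S hS
      by_contra hlt
      push_neg at hlt
      have hlt' : (S ∩ oldS d e).card ≤ d := by omega
      rcases Nat.lt_or_ge S.card (d+2) with hc | hc
      · obtain ⟨x, hx, hgx⟩ := (hcond S hS).1 (by omega)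
        have hmu := mu_zero_of_face_small he hx hlt'
        have ht := tF_nonneg d e hx.1.1
        have hlam := lam_of_witness hgx
        rw [lamF, hmu] at hlam
        linarith
      · have hc2 : S.card = d + 2 := le_antisymm (hsize S hS) hc
        have hIW := (hcond S hS).2 hc2
        by_cases himg : p ∈ gF d e f '' simpFaceBoundary S
        · obtain ⟨x, hx, hgx⟩ := himg
          have hmu := mu_zero_of_face_small he hx.1 hlt'
          have ht := tF_nonneg d e hx.1.1.1
          have hlam := lam_of_witness hgx
          rw [lamF, hmu] at hlam
          linarith
        · refine false_of_segment_to_const hd he hf (by omega) hIW himg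
            (snE (pAh p) 1) (snE_ne_of_snd (by intro h; rw [← h] at hneg; norm_num at hneg)) ?_
          intro x hx u hu0 hu1
          have hlx : 0 ≤ lamF d e x := by
            have hmu := mu_zero_of_face_small he hx.1 hlt'
            have ht := tF_nonneg d e hx.1.1.1
            rw [lamF, hmu]; linarith
          rw [gF, combo_snE]
          refine snE_ne_of_snd ?_
          have : 0 ≤ (1-u) * lamF d e x + u * 1 := by nlinarith
          intro hcon
          rw [← hcon] at hneg
          linarith
    have hdisj2 : ∀ S ∈ P, ∀ T ∈ P, S ≠ T →
        Disjoint (S ∩ oldS d e) (T ∩ oldS d e) := by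
      intro S hS T hT hST
      exact Finset.disjoint_of_subset_left Finset.inter_subset_left
        (Finset.disjoint_of_subset_right Finset.inter_subset_left (hdisj S hS T hT hST))
    have hsum : ∑ S ∈ P, (S ∩ oldS d e).card ≤ (oldS d e).card := by
      rw [← Finset.card_biUnion (fun S hS T hT hST => hdisj2 S hS T hT hST)]
      apply Finset.card_le_card
      intro j hj
      rw [Finset.mem_biUnion] at hj
      obtain ⟨S, hS, hjS⟩ := hj
      exact (Finset.mem_inter.mp hjS).2
    have hsum2 : (e+1) * (d+1) ≤ ∑ S ∈ P, (S ∩ oldS d e).card := by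
      calc (e+1) * (d+1) = ∑ _S ∈ P, (d+1) := by rw [Finset.sum_const, hcardP]; ring
      _ ≤ _ := Finset.sum_le_sum hkey
    rw [card_oldS] at hsum
    have hexp : (e+1) * (d+1) = (d+1)*e + (d+1) := by ring
    simp only [NN] at hsum
    omega
  · exact h0
  · exfalso
    by_cases hall : ∀ S ∈ P, (S ∩ newS d e).Nonempty
    · -- pigeonhole: too many parts touch the new vertices
      have hchoice : ∀ S ∈ P, ∃ j, j ∈ S ∩ newS d e := fun S hS => hall S hS
      classical
      have hMM : 0 < MM d e + 1 := by omega
      set F : Finset (Fin (MM d e + 1)) → Fin (MM d e + 1) :=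
        fun S => if h : S ∈ P then (hchoice S h).choose else ⟨0, hMM⟩ with hF
      have hFmem : ∀ S ∈ P, F S ∈ newS d e := by
        intro S hS
        rw [hF]
        simp only [dif_pos hS]
        exact (Finset.mem_inter.mp (hchoice S hS).choose_spec).2
      have hFS : ∀ S ∈ P, F S ∈ S := by
        intro S hS
        rw [hF]
        simp only [dif_pos hS]
        exact (Finset.mem_inter.mp (hchoice S hS).choose_spec).1
      have hinj : Set.InjOn F ↑P := by
        intro S hS T hT hFST
        by_contra hST
        have := (hdisj S hS T hT hST).forall_ne_finset (hFS S hS) (hFS T hT)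
        rw [hFST] at this
        exact this rfl
      have := Finset.card_le_card_of_injOn F hFmem hinj
      rw [hcardP, card_newS] at this
      omega
    · push_neg at hall
      obtain ⟨S, hS, hSnew⟩ := hall
      have hold : S ⊆ oldS d e := by
        intro j hj
        by_contra h
        exact (Finset.not_nonempty_iff_eq_empty.mpr hSnew) ⟨j, Finset.mem_inter.mpr ⟨hj, mem_newS.mpr (fun hh => h (mem_oldS.mpr hh))⟩⟩
      rcases Nat.lt_or_ge S.card (d+2) with hc | hc
      · obtain ⟨x, hx, hgx⟩ := (hcond S hS).1 (by omega)
        have ht := t_zero_of_face_old hx hold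
        have hmu := muF_nonneg d he hx.1.1
        have hlam := lam_of_witness hgx
        rw [lamF, ht] at hlam
        linarith
      · have hc2 : S.card = d + 2 := le_antisymm (hsize S hS) hc
        have hIW := (hcond S hS).2 hc2
        by_cases himg : p ∈ gF d e f '' simpFaceBoundary S
        · obtain ⟨x, hx, hgx⟩ := himg
          have ht := t_zero_of_face_old hx.1 hold
          have hmu := muF_nonneg d he hx.1.1.1
          have hlam := lam_of_witness hgx
          rw [lamF, ht] at hlam
          linarith
        · refine false_of_segment_to_const hd he hf (by omega) hIW himg
            (snE (pAh p) (-1)) (snE_ne_of_snd (by intro h; rw [← h] at hpos; norm_num at hpos)) ?_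
          intro x hx u hu0 hu1
          have hlx : lamF d e x ≤ 0 := by
            have ht := t_zero_of_face_old hx.1 hold
            have hmu := muF_nonneg d he hx.1.1.1
            rw [lamF, ht]; linarith
          rw [gF, combo_snE]
          refine snE_ne_of_snd ?_
          have : (1-u) * lamF d e x + u * (-1) ≤ 0 := by nlinarith
          intro hcon
          rw [← hcon] at hpos
          linarith

end Cases
end WindRed

namespace WindRed

section B2
variable {d e : ℕ} {f : (Fin (NN d e + 1) → ℝ) → Euc d}

/-- old part of a vertex set, as a subset of the `N`-world vertex set -/
def Told (d e : ℕ) (S : Finset (Fin (MM d e + 1))) : Finset (Fin (NN d e + 1)) :=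
  Finset.univ.filter (fun i => emb d e i ∈ S)

lemma mem_Told {S : Finset (Fin (MM d e + 1))} {i : Fin (NN d e + 1)} :
    i ∈ Told d e S ↔ emb d e i ∈ S := by simp [Told]

lemma card_Told (S : Finset (Fin (MM d e + 1))) :
    (Told d e S).card = (S ∩ oldS d e).card := by
  apply Finset.card_bij (fun i _ => emb d e i)
  · intro i hi
    exact Finset.mem_inter.mpr ⟨mem_Told.mp hi, mem_oldS.mpr i.2⟩
  · intro i _ j _ h
    exact (emb d e).injective h
  · intro j hj
    obtain ⟨hjS, hjold⟩ := Finset.mem_inter.mp hj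
    refine ⟨⟨(j : ℕ), mem_oldS.mp hjold⟩, ?_, ?_⟩
    · rw [mem_Told]
      have : emb d e ⟨(j : ℕ), mem_oldS.mp hjold⟩ = j := Fin.ext rfl
      rwa [this]
    · exact (Fin.ext rfl).symm

lemma xo_zero_off_Told {S : Finset (Fin (MM d e + 1))} {x : Fin (MM d e + 1) → ℝ}
    (hx : x ∈ simpFace S) {i : Fin (NN d e + 1)} (hi : i ∉ Told d e S) :
    xo d e x i = 0 := by
  rw [xo]
  exact hx.2 _ (fun h => hi (mem_Told.mpr h))

lemma xo_mem_bdT {S : Finset (Fin (MM d e + 1))} {x : Fin (MM d e + 1) → ℝ}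
    (hx : x ∈ simpFace S) (hstd : xo d e x ∈ stdSimp (NN d e))
    (hsupp : (suppF (xo d e x)).card ≤ d) (hTcard : (Told d e S).card = d+1) :
    xo d e x ∈ simpFaceBoundary (Told d e S) := by
  refine ⟨⟨hstd, fun i hi => xo_zero_off_Told hx hi⟩, ?_⟩
  have hns : ¬ (Told d e S ⊆ suppF (xo d e x)) := by
    intro hsub
    have := Finset.card_le_card hsub
    omega
  obtain ⟨i, hiT, hins⟩ := Finset.not_subset.mp hns
  refine ⟨i, hiT, ?_⟩
  by_contra h
  exact hins (mem_suppF.mpr h)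

lemma zF_mem_bdT (he : 1 ≤ e) {S : Finset (Fin (MM d e + 1))} {x : Fin (MM d e + 1) → ℝ}
    (hx : x ∈ simpFace S) (hs : sF d e x ≠ 0) (hTcard : (Told d e S).card = d+1) :
    zF d e x ∈ simpFaceBoundary (Told d e S) := by
  refine ⟨⟨zF_mem_stdSimp hs, fun i hi => ?_⟩, ?_⟩
  · rw [zF, Pi.smul_apply, smul_eq_mul]
    have : yF d e x i = 0 := by
      rw [yF, xo_zero_off_Told hx hi, zero_sub]
      exact max_eq_right (by linarith [muF_nonneg d he hx.1.1])
    rw [this, mul_zero]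
  · have hcard := card_suppF_zF he hs
    have hns : ¬ (Told d e S ⊆ suppF (zF d e x)) := by
      intro hsub
      have := Finset.card_le_card hsub
      omega
    obtain ⟨i, hiT, hins⟩ := Finset.not_subset.mp hns
    refine ⟨i, hiT, ?_⟩
    by_contra h
    exact hins (mem_suppF.mpr h)

lemma B2_tmu (he : 1 ≤ e) {S : Finset (Fin (MM d e + 1))}
    (hcardS : S.card = d+2) (hmix : (S ∩ oldS d e).card = d+1)
    {x : Fin (MM d e + 1) → ℝ} (hx : x ∈ simpFaceBoundary S) (hlam : lamF d e x = 0) :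
    tF d e x = 0 ∧ muF d e x = 0 := by
  have hcardnew : (S ∩ newS d e).card = 1 := by
    have hdisjON : Disjoint (S ∩ oldS d e) (S ∩ newS d e) := by
      rw [Finset.disjoint_left]
      intro a ha hb
      exact mem_newS.mp (Finset.mem_inter.mp hb).2 (mem_oldS.mp (Finset.mem_inter.mp ha).2)
    have hun : (S ∩ oldS d e) ∪ (S ∩ newS d e) = S := by
      rw [← Finset.inter_union_distrib_left]
      rw [show oldS d e ∪ newS d e = Finset.univ from
        Finset.filter_union_filter_not_eq _ _]
      exact Finset.inter_univ S
    have := Finset.card_union_of_disjoint hdisjON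
    rw [hun] at this
    omega
  apply tmu_of_lam_zero he hx.1.1.1 ?_ hlam
  intro ht
  obtain ⟨j, hjnew, hjne⟩ := Finset.exists_ne_zero_of_sum_ne_zero ht
  have hjS : j ∈ S := suppF_subset_of_mem_face hx.1 (mem_suppF.mpr hjne)
  obtain ⟨i, hiS, hix⟩ := hx.2
  have hij : i ≠ j := fun h => hjne (h ▸ hix)
  have hiold : i ∈ oldS d e := by
    by_contra hio
    have hinew : i ∈ newS d e := mem_newS.mpr fun hh => hio (mem_oldS.mpr hh)
    have hsub2 : ({i, j} : Finset (Fin (MM d e + 1))) ⊆ S ∩ newS d e := by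
      intro k hk
      rcases Finset.mem_insert.mp hk with rfl | hk
      · exact Finset.mem_inter.mpr ⟨hiS, hinew⟩
      · rw [Finset.mem_singleton] at hk
        subst hk
        exact Finset.mem_inter.mpr ⟨hjS, hjnew⟩
    have h2 := Finset.card_le_card hsub2
    rw [Finset.card_insert_of_notMem (by simpa using hij), Finset.card_singleton] at h2
    omega
  have hsub : oSupp d e x ⊆ (S ∩ oldS d e).erase i := by
    intro k hk
    have hk1 := Finset.mem_filter.mp hk
    refine Finset.mem_erase.mpr ⟨?_, Finset.mem_inter.mpr
      ⟨suppF_subset_of_mem_face hx.1 (mem_suppF.mpr hk1.2), hk1.1⟩⟩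
    rintro rfl
    exact hk1.2 hix
  calc (oSupp d e x).card ≤ ((S ∩ oldS d e).erase i).card := Finset.card_le_card hsub
  _ = (S ∩ oldS d e).card - 1 := Finset.card_erase_of_mem (Finset.mem_inter.mpr ⟨hiS, hiold⟩)
  _ ≤ d := by omega

/-- if `p` is in the image of the `M`-world boundary then `pAh p` is in the image of the
`N`-world boundary. -/
lemma B2_honest (he : 1 ≤ e) {S : Finset (Fin (MM d e + 1))} {p : Euc (d+1)}
    (hpL : pLh p = 0) (hcardS : S.card = d+2) (hmix : (S ∩ oldS d e).card = d+1)
    {x : Fin (MM d e + 1) → ℝ} (hx : x ∈ simpFaceBoundary S) (hgx : gF d e f x = p) :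
    pAh p ∈ f '' simpFaceBoundary (Told d e S) := by
  have hlam : lamF d e x = 0 := by rw [lam_of_witness hgx, hpL]
  obtain ⟨ht, hmu⟩ := B2_tmu he hcardS hmix hx hlam
  obtain ⟨hs1, hzeq, hA, hg, hxo, hsupp⟩ := nice_point he hx.1.1.1 hx.1.1.2 ht hmu f
  have hTcard : (Told d e S).card = d + 1 := by rw [card_Told]; exact hmix
  refine ⟨xo d e x, xo_mem_bdT hx.1 hxo hsupp hTcard, ?_⟩
  rw [hg] at hgx
  exact (snE_eq_iff.mp hgx).1

end B2
end WindRed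

namespace WindRed

section B2c
variable {d e : ℕ} {f : (Fin (NN d e + 1) → ℝ) → Euc d}

lemma caseB2_contra (hd : 1 ≤ d) (he : 1 ≤ e)
    (hf : ContinuousOn f (skel (NN d e) (d-1)))
    {S : Finset (Fin (MM d e + 1))} {p : Euc (d+1)}
    (hpL : pLh p = 0) (hcardS : S.card = d+2) (hmix : (S ∩ oldS d e).card = d+1)
    (himg : p ∉ gF d e f '' simpFaceBoundary S)
    (h : C(↥(simpFaceBoundary (Told d e S)), ↥({pAh p}ᶜ : Set (Euc d))))
    (c₀ : ↥({pAh p}ᶜ : Set (Euc d)))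
    (hag : ∀ z : ↥(simpFaceBoundary (Told d e S)), (h z : Euc d) = f z.1)
    (K : h.Homotopy (ContinuousMap.const _ c₀)) :
    ∃ (G : C(↥(simpFaceBoundary S), ↥({p}ᶜ : Set (Euc (d+1)))))
      (y : ↥({p}ᶜ : Set (Euc (d+1)))),
      (∀ x : ↥(simpFaceBoundary S), (G x : Euc (d+1)) = gF d e f x.1) ∧
      G.Homotopic (ContinuousMap.const _ y) := by
  classical
  have hTcard : (Told d e S).card = d + 1 := by rw [card_Told]; exact hmix
  have hc₀ne : (c₀ : Euc d) ≠ pAh p := Set.mem_compl_singleton_iff.mp c₀.2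
  -- ambient version of the homotopy K
  set KE : ℝ × (Fin (NN d e + 1) → ℝ) → Euc d := fun z =>
    if hz : z.2 ∈ simpFaceBoundary (Told d e S) ∧ z.1 ∈ unitInterval
    then (K (⟨z.1, hz.2⟩, ⟨z.2, hz.1⟩) : Euc d) else (c₀ : Euc d) with hKE
  have hKE_ne : ∀ z, KE z ≠ pAh p := by
    intro z
    rw [hKE]
    dsimp only
    split_ifs with hz
    · exact Set.mem_compl_singleton_iff.mp (K (⟨z.1, hz.2⟩, ⟨z.2, hz.1⟩)).2
    · exact hc₀ne
  have key1 : ∀ (hu : (1:ℝ) ∈ unitInterval) (w : ↥(simpFaceBoundary (Told d e S))),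
      (K (⟨(1:ℝ), hu⟩, w) : Euc d) = (c₀ : Euc d) := by
    intro hu w
    have h1 : (⟨(1:ℝ), hu⟩ : ↥unitInterval) = 1 := Subtype.ext rfl
    rw [h1, K.apply_one]
    rfl
  have key0 : ∀ (hu : (0:ℝ) ∈ unitInterval) (w : ↥(simpFaceBoundary (Told d e S))),
      (K (⟨(0:ℝ), hu⟩, w) : Euc d) = f w.1 := by
    intro hu w
    have h0 : (⟨(0:ℝ), hu⟩ : ↥unitInterval) = 0 := Subtype.ext rfl
    rw [h0, K.apply_zero]
    exact hag w
  have hKE_cont : ContinuousOn KE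
      ((unitInterval : Set ℝ) ×ˢ simpFaceBoundary (Told d e S)) := by
    rw [continuousOn_iff_continuous_restrict]
    have hφ : Continuous fun w : ↥((unitInterval : Set ℝ) ×ˢ simpFaceBoundary (Told d e S)) =>
        ((⟨w.1.1, w.2.1⟩ : ↥unitInterval),
          (⟨w.1.2, w.2.2⟩ : ↥(simpFaceBoundary (Told d e S)))) := by
      refine Continuous.prodMk ?_ ?_
      · exact Continuous.subtype_mk (continuous_fst.comp continuous_subtype_val) _
      · exact Continuous.subtype_mk (continuous_snd.comp continuous_subtype_val) _
    refine (continuous_subtype_val.comp (K.continuous.comp hφ)).congr ?_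
    intro w
    rw [Set.restrict_apply, hKE]
    dsimp only
    rw [dif_pos ⟨w.2.2, w.2.1⟩]
    rfl
  -- numeric bound
  have hsF01 : ∀ x ∈ simpFaceBoundary S, sF d e x ≤ 1 := by
    intro x hx
    have h1 := sF_le he hx.1.1.1 hx.1.1.2
    have h2 := tF_nonneg d e hx.1.1.1
    linarith
  -- the deformed first coordinate
  set nuF : ℝ → (Fin (MM d e + 1) → ℝ) → ℝ :=
    fun u x => (1-u) * min (2*(1 - sF d e x)) 1 + u with hnuF
  set Kc : ℝ → (Fin (MM d e + 1) → ℝ) → Euc d := fun u x =>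
    if sF d e x ≤ 1/2 then (c₀ : Euc d) else KE (nuF u x, zF d e x) with hKc
  have hKc_ne : ∀ u x, Kc u x ≠ pAh p := by
    intro u x
    rw [hKc]
    dsimp only
    split_ifs
    · exact hc₀ne
    · exact hKE_ne _
  have hnu_mem : ∀ u : ℝ, 0 ≤ u → u ≤ 1 → ∀ x ∈ simpFaceBoundary S,
      nuF u x ∈ (unitInterval : Set ℝ) := by
    intro u hu0 hu1 x hx
    have hs1 := hsF01 x hx
    have hm0 : 0 ≤ min (2*(1 - sF d e x)) 1 := le_min (by linarith) (by norm_num)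
    have hm1 : min (2*(1 - sF d e x)) 1 ≤ 1 := min_le_right _ _
    rw [hnuF]
    dsimp only
    constructor
    · nlinarith
    · nlinarith
  have hKc_one : ∀ x ∈ simpFaceBoundary S, Kc 1 x = (c₀ : Euc d) := by
    intro x hx
    rw [hKc]
    dsimp only
    split_ifs with hs
    · rfl
    · have hsne : sF d e x ≠ 0 := by
        intro h0; rw [h0] at hs; norm_num at hs
      have hζ := zF_mem_bdT he hx.1 hsne hTcard
      have hnu1 : nuF 1 x = 1 := by rw [hnuF]; dsimp only; ring
      rw [hnu1, hKE]
      dsimp only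
      rw [dif_pos ⟨hζ, Set.mem_Icc.mpr ⟨zero_le_one, le_refl 1⟩⟩]
      exact key1 _ _
  have hKc_zero : ∀ x ∈ simpFaceBoundary S, lamF d e x = 0 →
      Kc 0 x = AF d e f x := by
    intro x hx hlam
    obtain ⟨ht, hmu⟩ := B2_tmu he hcardS hmix hx hlam
    obtain ⟨hs1, hzeq, hA, hg, hxo, hsupp⟩ := nice_point he hx.1.1.1 hx.1.1.2 ht hmu f
    have hbd := xo_mem_bdT hx.1 hxo hsupp hTcard
    rw [hKc]
    dsimp only
    rw [if_neg (by rw [hs1]; norm_num)]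
    have hnu0 : nuF 0 x = 0 := by
      rw [hnuF]; dsimp only; rw [hs1]; norm_num
    rw [hnu0, hzeq, hKE]
    dsimp only
    rw [dif_pos ⟨hbd, Set.mem_Icc.mpr ⟨le_refl 0, zero_le_one⟩⟩]
    exact (key0 _ _).trans hA.symm
  -- continuity of the coordinate family
  have huc : Continuous fun z : ↥unitInterval × ↥(simpFaceBoundary S) => (z.1 : ℝ) :=
    continuous_subtype_val.comp continuous_fst
  have hsFc : Continuous fun z : ↥unitInterval × ↥(simpFaceBoundary S) =>
      sF d e (z.2 : Fin (MM d e + 1) → ℝ) :=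
    (continuous_sF d e).comp (continuous_subtype_val.comp continuous_snd)
  have hKcCont : Continuous fun z : ↥unitInterval × ↥(simpFaceBoundary S) =>
      Kc (z.1 : ℝ) (z.2 : Fin (MM d e + 1) → ℝ) := by
    rw [hKc]
    dsimp only
    apply continuous_if
    · intro a ha
      have hfr : frontier {z : ↥unitInterval × ↥(simpFaceBoundary S) |
          sF d e (z.2 : Fin (MM d e + 1) → ℝ) ≤ 1/2} ⊆
          {z | sF d e (z.2 : Fin (MM d e + 1) → ℝ) = 1/2} :=
        frontier_le_subset_eq hsFc continuous_const
      have ha2 : sF d e (a.2 : Fin (MM d e + 1) → ℝ) = 1/2 := hfr ha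
      have hsne : sF d e (a.2 : Fin (MM d e + 1) → ℝ) ≠ 0 := by rw [ha2]; norm_num
      have hζ := zF_mem_bdT he a.2.2.1 hsne hTcard
      have hnu1 : nuF (a.1 : ℝ) (a.2 : Fin (MM d e + 1) → ℝ) = 1 := by
        rw [hnuF]
        dsimp only
        rw [ha2]
        norm_num
      rw [hnu1, hKE]
      dsimp only
      rw [dif_pos ⟨hζ, Set.mem_Icc.mpr ⟨zero_le_one, le_refl 1⟩⟩]
      exact (key1 _ _).symm
    · exact continuousOn_const
    · have hsub : closure {z : ↥unitInterval × ↥(simpFaceBoundary S) |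
          ¬ sF d e (z.2 : Fin (MM d e + 1) → ℝ) ≤ 1/2} ⊆
          {z | 1/2 ≤ sF d e (z.2 : Fin (MM d e + 1) → ℝ)} := by
        have heq : {z : ↥unitInterval × ↥(simpFaceBoundary S) |
            ¬ sF d e (z.2 : Fin (MM d e + 1) → ℝ) ≤ 1/2}
            = {z | 1/2 < sF d e (z.2 : Fin (MM d e + 1) → ℝ)} := by
          ext z; simp [not_le]
        rw [heq]
        exact closure_lt_subset_le continuous_const hsFc
      refine ContinuousOn.mono ?_ hsub
      have hinner : ContinuousOn (fun z : ↥unitInterval × ↥(simpFaceBoundary S) =>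
          ((nuF (z.1 : ℝ) (z.2 : Fin (MM d e + 1) → ℝ)),
            zF d e (z.2 : Fin (MM d e + 1) → ℝ)))
          {z | 1/2 ≤ sF d e (z.2 : Fin (MM d e + 1) → ℝ)} := by
        apply ContinuousOn.prodMk
        · apply Continuous.continuousOn
          rw [hnuF]
          dsimp only
          exact ((continuous_const.sub huc).mul
            ((continuous_const.mul (continuous_const.sub hsFc)).min continuous_const)).add huc
        · have hyc : Continuous fun z : ↥unitInterval × ↥(simpFaceBoundary S) =>
              yF d e (z.2 : Fin (MM d e + 1) → ℝ) :=
            (continuous_yF d e).comp (continuous_subtype_val.comp continuous_snd)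
          have hzz : ContinuousOn (fun z : ↥unitInterval × ↥(simpFaceBoundary S) =>
              (sF d e (z.2 : Fin (MM d e + 1) → ℝ))⁻¹ •
                yF d e (z.2 : Fin (MM d e + 1) → ℝ))
              {z | 1/2 ≤ sF d e (z.2 : Fin (MM d e + 1) → ℝ)} := by
            apply ContinuousOn.fun_smul
            · apply ContinuousOn.inv₀ hsFc.continuousOn
              intro z hz h0
              rw [Set.mem_setOf_eq, h0] at hz
              norm_num at hz
            · exact hyc.continuousOn
          exact hzz.congr fun z _ => rfl
      have hmaps : Set.MapsTo (fun z : ↥unitInterval × ↥(simpFaceBoundary S) =>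
          ((nuF (z.1 : ℝ) (z.2 : Fin (MM d e + 1) → ℝ)),
            zF d e (z.2 : Fin (MM d e + 1) → ℝ)))
          {z | 1/2 ≤ sF d e (z.2 : Fin (MM d e + 1) → ℝ)}
          ((unitInterval : Set ℝ) ×ˢ simpFaceBoundary (Told d e S)) := by
        intro z hz
        rw [Set.mem_setOf_eq] at hz
        constructor
        · exact hnu_mem _ z.1.2.1 z.1.2.2 _ z.2.2
        · refine zF_mem_bdT he z.2.2.1 ?_ hTcard
          intro h0
          rw [h0] at hz
          norm_num at hz
      exact ContinuousOn.comp hKE_cont hinner hmaps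
  have hlamc : Continuous fun z : ↥unitInterval × ↥(simpFaceBoundary S) =>
      (1 - (z.1:ℝ)) * lamF d e (z.2 : Fin (MM d e + 1) → ℝ) :=
    (continuous_const.sub huc).mul
      ((continuous_lamF d e).comp (continuous_subtype_val.comp continuous_snd))
  have hPhiCont : Continuous fun z : ↥unitInterval × ↥(simpFaceBoundary S) =>
      snE (Kc (z.1:ℝ) (z.2 : Fin (MM d e + 1) → ℝ))
        ((1 - (z.1:ℝ)) * lamF d e (z.2 : Fin (MM d e + 1) → ℝ)) :=
    continuous_snE_comp hKcCont hlamc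
  -- the deformed map
  have hMhatCont : Continuous fun x : ↥(simpFaceBoundary S) =>
      snE (Kc 0 (x : Fin (MM d e + 1) → ℝ)) (lamF d e (x : Fin (MM d e + 1) → ℝ)) := by
    have hcomp := hPhiCont.comp (Continuous.prodMk
      (continuous_const : Continuous fun _ : ↥(simpFaceBoundary S) => (0 : ↥unitInterval))
      continuous_id)
    refine hcomp.congr ?_
    intro x
    have h0 : ((0 : ↥unitInterval) : ℝ) = 0 := rfl
    rw [Function.comp_apply]
    dsimp only
    rw [h0, show (1:ℝ) - 0 = 1 by norm_num, one_mul]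
    rfl
  set Mhat : C(↥(simpFaceBoundary S), ↥({p}ᶜ : Set (Euc (d+1)))) :=
    ⟨fun x => ⟨snE (Kc 0 (x : Fin (MM d e + 1) → ℝ)) (lamF d e (x : Fin (MM d e + 1) → ℝ)),
      snE_ne_of_fst (hKc_ne 0 _)⟩, Continuous.subtype_mk hMhatCont _⟩ with hMhat
  set ymap : ↥({p}ᶜ : Set (Euc (d+1))) := ⟨snE (c₀ : Euc d) 0, snE_ne_of_fst hc₀ne⟩ with hymap
  have hHom2 : Mhat.Homotopic (ContinuousMap.const _ ymap) := by
    refine ⟨⟨⟨fun z => ⟨snE (Kc (z.1 : ℝ) (z.2 : Fin (MM d e + 1) → ℝ))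
        ((1 - (z.1:ℝ)) * lamF d e (z.2 : Fin (MM d e + 1) → ℝ)),
        snE_ne_of_fst (hKc_ne _ _)⟩, Continuous.subtype_mk hPhiCont _⟩, ?_, ?_⟩⟩
    · intro x
      apply Subtype.ext
      show snE (Kc ((0 : ↥unitInterval) : ℝ) _) _ = _
      have h0 : ((0 : ↥unitInterval) : ℝ) = 0 := rfl
      rw [h0, show (1:ℝ) - 0 = 1 by norm_num, one_mul]
      rfl
    · intro x
      apply Subtype.ext
      show snE (Kc ((1 : ↥unitInterval) : ℝ) _) _ = snE (c₀ : Euc d) 0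
      have h1 : ((1 : ↥unitInterval) : ℝ) = 1 := rfl
      rw [h1, hKc_one _ x.2, show (1:ℝ) - 1 = 0 by norm_num, zero_mul]
  set Ghat := corest d e f hd he hf (by omega) himg with hGhat
  have hHom1 : Ghat.Homotopic Mhat := by
    apply homotopic_of_segment
    intro z u hu0 hu1
    show (1-u) • gF d e f (z : Fin (MM d e + 1) → ℝ) +
      u • snE (Kc 0 (z : Fin (MM d e + 1) → ℝ)) (lamF d e (z : Fin (MM d e + 1) → ℝ)) ≠ p
    rw [gF, combo_snE]
    by_cases hlam : lamF d e (z : Fin (MM d e + 1) → ℝ) = 0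
    · have hKeq := hKc_zero _ z.2 hlam
      rw [hKeq]
      have h1 : (1-u) • AF d e f (z : Fin (MM d e + 1) → ℝ) +
          u • AF d e f (z : Fin (MM d e + 1) → ℝ) = AF d e f (z : Fin (MM d e + 1) → ℝ) := by
        rw [← add_smul]; norm_num
      have h2 : (1-u) * lamF d e (z : Fin (MM d e + 1) → ℝ) +
          u * lamF d e (z : Fin (MM d e + 1) → ℝ) = lamF d e (z : Fin (MM d e + 1) → ℝ) := by
        ring
      rw [h1, h2]
      exact fun hcon => himg ⟨z.1, z.2, by rw [gF]; exact hcon⟩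
    · refine snE_ne_of_snd ?_
      rw [hpL]
      have h2 : (1-u) * lamF d e (z : Fin (MM d e + 1) → ℝ) +
          u * lamF d e (z : Fin (MM d e + 1) → ℝ) = lamF d e (z : Fin (MM d e + 1) → ℝ) := by
        ring
      rw [h2]
      exact hlam
  exact ⟨Ghat, ymap, fun z => rfl, hHom1.trans hHom2⟩

end B2c
end WindRed

namespace WindRed

section Final
variable {d e : ℕ} {f : (Fin (NN d e + 1) → ℝ) → Euc d}

lemma caseB2 (hd : 1 ≤ d) (he : 1 ≤ e)
    (hf : ContinuousOn f (skel (NN d e) (d-1)))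
    {S : Finset (Fin (MM d e + 1))} {p : Euc (d+1)}
    (hpL : pLh p = 0) (hcardS : S.card = d+2) (hmix : (S ∩ oldS d e).card = d+1)
    (hIW : InWne (d+1) (gF d e f) S p) :
    ∃ T' : Finset (Fin (NN d e + 1)),
      (∀ i ∈ T', emb d e i ∈ S) ∧ T'.Nonempty ∧ T'.card ≤ d+1 ∧
      (T'.card ≤ d → pAh p ∈ f '' simpFace T') ∧
      (T'.card = d+1 → InWne d f T' (pAh p)) := by
  have hTcard : (Told d e S).card = d + 1 := by rw [card_Told]; exact hmix
  by_cases hfb : pAh p ∈ f '' simpFaceBoundary (Told d e S)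
  · exact ⟨Told d e S, fun i hi => mem_Told.mp hi, Finset.card_pos.mp (by omega),
      by omega, fun hle => absurd hTcard (by omega), fun _ => Or.inl hfb⟩
  · have himg : p ∉ gF d e f '' simpFaceBoundary S := by
      intro hmem
      obtain ⟨x, hx, hgx⟩ := hmem
      exact hfb (B2_honest he hpL hcardS hmix hx hgx)
    refine ⟨Told d e S, fun i hi => mem_Told.mp hi, Finset.card_pos.mp (by omega),
      by omega, fun hle => absurd hTcard (by omega), fun _ => ?_⟩
    right
    rintro ⟨h, c₀, hag, hhom⟩
    obtain ⟨K⟩ := hhom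
    rcases hIW with hl | hr
    · exact himg hl
    · exact hr (caseB2_contra hd he hf hpL hcardS hmix himg h c₀ hag K)

lemma perPart (hd : 1 ≤ d) (he : 1 ≤ e)
    (hf : ContinuousOn f (skel (NN d e) (d-1)))
    {S : Finset (Fin (MM d e + 1))} {p : Euc (d+1)}
    (hpL : pLh p = 0) (hsize : S.card ≤ d+2)
    (hcond1 : S.card ≤ d+1 → p ∈ gF d e f '' simpFace S)
    (hcond2 : S.card = d+2 → InWne (d+1) (gF d e f) S p) :
    ∃ T' : Finset (Fin (NN d e + 1)),
      (∀ i ∈ T', emb d e i ∈ S) ∧ T'.Nonempty ∧ T'.card ≤ d+1 ∧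
      (T'.card ≤ d → pAh p ∈ f '' simpFace T') ∧
      (T'.card = d+1 → InWne d f T' (pAh p)) := by
  rcases Nat.lt_or_ge S.card (d+2) with hc | hc
  · exact caseA he hpL (by omega) (hcond1 (by omega))
  · have hc2 : S.card = d + 2 := le_antisymm hsize hc
    have hIW := hcond2 hc2
    have hle : (S ∩ oldS d e).card ≤ d + 2 := by
      rw [← hc2]
      exact Finset.card_le_card Finset.inter_subset_left
    rcases Nat.lt_or_ge (S ∩ oldS d e).card (d+1) with hcc | hcc
    · exact caseB_sided hd he hf hpL hc2 hIW (Or.inr (by omega))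
    · rcases Nat.lt_or_ge (S ∩ oldS d e).card (d+2) with hcc2 | hcc2
      · exact caseB2 hd he hf hpL hc2 (by omega) hIW
      · have heq : S ∩ oldS d e = S :=
          Finset.eq_of_subset_of_card_le Finset.inter_subset_left (by omega)
        have hsub : S ⊆ oldS d e := by
          intro j hj
          rw [← heq] at hj
          exact (Finset.mem_inter.mp hj).2
        exact caseB_sided hd he hf hpL hc2 hIW (Or.inl hsub)

end Final
end WindRed

open WindRed in
theorem winding_dim_reduction' (d q : ℕ) (hd : 1 ≤ d) (hq : 1 ≤ q)
    (H : ∀ g : (Fin ((d+2)*(q-1)+1) → ℝ) → Euc (d+1),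
      ContinuousOn g (skel ((d+2)*(q-1)) d) →
      ∃ P : Finset (Finset (Fin ((d+2)*(q-1)+1))), IsWindingPartition (d+1) q g P) :
    ∀ f : (Fin ((d+1)*(q-1)+1) → ℝ) → Euc d,
      ContinuousOn f (skel ((d+1)*(q-1)) (d-1)) →
      ∃ P : Finset (Finset (Fin ((d+1)*(q-1)+1))), IsWindingPartition d q f P := by
  obtain ⟨e, rfl⟩ : ∃ e, q = e + 1 := ⟨q - 1, by omega⟩
  intro f hf
  by_cases he : 1 ≤ e
  · -- main case
    have hgc : ContinuousOn (gF d e f) (skel (MM d e) d) := continuousOn_gF hd he hf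
    obtain ⟨P, hP⟩ := H (gF d e f) hgc
    obtain ⟨hcardP, hne, hsize, hdisj, p, hcond⟩ := hP
    have hpL : pLh p = 0 :=
      pL_eq_zero hd he hf hcardP hne hsize hdisj hcond
    have hex : ∀ S ∈ P, ∃ T' : Finset (Fin (NN d e + 1)),
        (∀ i ∈ T', emb d e i ∈ S) ∧ T'.Nonempty ∧ T'.card ≤ d+1 ∧
        (T'.card ≤ d → pAh p ∈ f '' simpFace T') ∧
        (T'.card = d+1 → InWne d f T' (pAh p)) := by
      intro S hS
      exact perPart hd he hf hpL (hsize S hS) (hcond S hS).1 (hcond S hS).2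
    classical
    set Fc : Finset (Fin (MM d e + 1)) → Finset (Fin (NN d e + 1)) :=
      fun S => if hS : S ∈ P then (hex S hS).choose else ∅ with hFc
    have hFc_spec : ∀ S, ∀ hS : S ∈ P, (∀ i ∈ Fc S, emb d e i ∈ S) ∧ (Fc S).Nonempty ∧
        (Fc S).card ≤ d+1 ∧ ((Fc S).card ≤ d → pAh p ∈ f '' simpFace (Fc S)) ∧
        ((Fc S).card = d+1 → InWne d f (Fc S) (pAh p)) := by
      intro S hS
      rw [hFc]
      dsimp only
      have hF : Fc S = (hex S hS).choose := by rw [hFc]; exact dif_pos hS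
      exact cast (congrArg (fun T : Finset (Fin (NN d e + 1)) => (∀ i ∈ T, emb d e i ∈ S) ∧
        T.Nonempty ∧ T.card ≤ d+1 ∧ (T.card ≤ d → pAh p ∈ f '' simpFace T) ∧
        (T.card = d+1 → InWne d f T (pAh p))) hF.symm) (hex S hS).choose_spec
    refine ⟨P.image Fc, ?_, ?_, ?_, ?_, pAh p, ?_⟩
    · refine (Finset.card_image_of_injOn ?_).trans hcardP
      intro S hS T hT hST
      by_contra hne2
      have hS' : S ∈ P := hS
      have hT' : T ∈ P := hT
      obtain ⟨i, hi⟩ := (hFc_spec S hS').2.1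
      have hi1 : emb d e i ∈ S := (hFc_spec S hS').1 i hi
      have hi2 : emb d e i ∈ T := (hFc_spec T hT').1 i (hST ▸ hi)
      exact Finset.disjoint_left.mp (hdisj S hS' T hT' hne2) hi1 hi2
    · intro S' hS'
      obtain ⟨S, hS, rfl⟩ := Finset.mem_image.mp hS'
      exact (hFc_spec S hS).2.1
    · intro S' hS'
      obtain ⟨S, hS, rfl⟩ := Finset.mem_image.mp hS'
      exact (hFc_spec S hS).2.2.1
    · intro S' hS' T' hT' hne2
      obtain ⟨S, hS, rfl⟩ := Finset.mem_image.mp hS'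
      obtain ⟨T, hT, rfl⟩ := Finset.mem_image.mp hT'
      refine Finset.disjoint_left.mpr ?_
      intro i hiS hiT
      have h1 : emb d e i ∈ S := (hFc_spec S hS).1 i hiS
      have h2 : emb d e i ∈ T := (hFc_spec T hT).1 i hiT
      have hSTne : S ≠ T := fun hh => hne2 (by rw [hh])
      exact Finset.disjoint_left.mp (hdisj S hS T hT hSTne) h1 h2
    · intro S' hS'
      obtain ⟨S, hS, rfl⟩ := Finset.mem_image.mp hS'
      exact ⟨(hFc_spec S hS).2.2.2.1, (hFc_spec S hS).2.2.2.2⟩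
  · -- q = 1
    have he0 : e = 0 := by omega
    subst he0
    refine ⟨{({0} : Finset (Fin ((d+1)*(0+1-1)+1)))}, ?_, ?_, ?_, ?_, ?_⟩
    · simp
    · intro S hS
      rw [Finset.mem_singleton] at hS
      subst hS
      exact ⟨0, Finset.mem_singleton_self 0⟩
    · intro S hS
      rw [Finset.mem_singleton] at hS
      subst hS
      simp
    · intro S hS T hT hST
      rw [Finset.mem_singleton] at hS hT
      exact absurd (hS.trans hT.symm) hST
    · have hx₀ : (fun _ => 1 : Fin ((d+1)*(0+1-1)+1) → ℝ) ∈
          simpFace ({0} : Finset (Fin ((d+1)*(0+1-1)+1))) := by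
        refine ⟨⟨fun i => by norm_num, ?_⟩, ?_⟩
        · simp
        · intro i hi
          exfalso
          apply hi
          rw [Finset.mem_singleton]
          refine Fin.ext ?_
          have h2 := i.isLt
          simp only [Nat.add_sub_cancel, Nat.mul_zero] at h2 ⊢
          omega
      refine ⟨f (fun _ => 1), ?_⟩
      intro S hS
      rw [Finset.mem_singleton] at hS
      subst hS
      constructor
      · intro _
        exact ⟨(fun _ => 1), hx₀, rfl⟩
      · intro hcc
        rw [Finset.card_singleton] at hcc
        omega

/-- If the Winding Number Conjecture holds in dimension `d + 1`,
then it also holds in dimension `d`. -/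
theorem winding_dim_reduction (d q : ℕ) (hd : 1 ≤ d) (hq : 1 ≤ q)
    (H : ∀ g : (Fin ((d+2)*(q-1)+1) → ℝ) → Euc (d+1),
      ContinuousOn g (skel ((d+2)*(q-1)) d) →
      ∃ P : Finset (Finset (Fin ((d+2)*(q-1)+1))), IsWindingPartition (d+1) q g P) :
    ∀ f : (Fin ((d+1)*(q-1)+1) → ℝ) → Euc d,
      ContinuousOn f (skel ((d+1)*(q-1)) (d-1)) →
      ∃ P : Finset (Finset (Fin ((d+1)*(q-1)+1))), IsWindingPartition d q f P :=
  winding_dim_reduction' d q hd hq H
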